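/- Under Assumption 1, if p^+ is finite (i.e., p^+ ∈ ℝ), then q^+ = p^+. -/

import Mathlib

open Matrix

/-- The perturbed primal feasible set `P(b) = {x : Âx = b̂ + b, x ≥ 0}`. -/
def Pfeas (m n : ℕ) (Ahat : Matrix (Fin m) (Fin n) ℝ) (bhat b : Fin m → ℝ) :
    Set (Fin n → ℝ) :=
  {x | Ahat.mulVec x = bhat + b ∧ 0 ≤ x}

/-- The perturbed dual feasible set `D(c) = {(y,s) : Âᵀy + s = ĉ + c, s ≥ 0}`. -/
def Dfeas (m n : ℕ) (Ahat : Matrix (Fin m) (Fin n) ℝ) (chat c : Fin n → ℝ) :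
    Set ((Fin m → ℝ) × (Fin n → ℝ)) :=
  {ys | Ahat.transpose.mulVec ys.1 + ys.2 = chat + c ∧ 0 ≤ ys.2}

/-- The perturbed optimal value `p(b,c)` as an extended real number
(`sInf ∅ = +∞` in `EReal`). -/
noncomputable def pval (m n : ℕ) (Ahat : Matrix (Fin m) (Fin n) ℝ)
    (bhat b : Fin m → ℝ) (chat c : Fin n → ℝ) : EReal :=
  sInf ((fun x => (((chat + c) ⬝ᵥ x : ℝ) : EReal)) '' Pfeas m n Ahat bhat b)

/-- The restricted uncertainty set `Ū = {(b,c) ∈ U : P(b) ≠ ∅, D(c) ≠ ∅}`. -/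
def Ubar (m n : ℕ) (Ahat : Matrix (Fin m) (Fin n) ℝ) (bhat : Fin m → ℝ)
    (chat : Fin n → ℝ) (U : Set ((Fin m → ℝ) × (Fin n → ℝ))) :
    Set ((Fin m → ℝ) × (Fin n → ℝ)) :=
  {bc ∈ U | (Pfeas m n Ahat bhat bc.1).Nonempty ∧ (Dfeas m n Ahat chat bc.2).Nonempty}


lemma isClosed_coneSet {E : Type*} [NormedAddCommGroup E] [NormedSpace ℝ E]
    {ι : Type*} [DecidableEq ι] (v : ι → E) (s : Finset ι) :
    IsClosed {x : E | ∃ t : ι → ℝ, (∀ i, 0 ≤ t i) ∧ x = ∑ i ∈ s, t i • v i} := by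
  induction s using Finset.strongInductionOn with
  | _ s ih =>
  by_cases hdep : ∃ g : ι → ℝ, ∑ i ∈ s, g i • v i = 0 ∧ ∃ i ∈ s, g i < 0
  · obtain ⟨g, hg, i₀, hi₀, hneg⟩ := hdep
    set T := s.filter fun j => g j < 0 with hTdef
    have hT : T.Nonempty := ⟨i₀, Finset.mem_filter.mpr ⟨hi₀, hneg⟩⟩
    have key : {x : E | ∃ t : ι → ℝ, (∀ i, 0 ≤ t i) ∧ x = ∑ i ∈ s, t i • v i} =
        ⋃ j ∈ T, {x : E | ∃ t : ι → ℝ, (∀ i, 0 ≤ t i) ∧ x = ∑ i ∈ s.erase j, t i • v i} := by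
      ext x
      simp only [Set.mem_setOf_eq, Set.mem_iUnion, exists_prop]
      constructor
      · rintro ⟨t, ht, rfl⟩
        obtain ⟨j₀, hj₀T, hlam⟩ := T.exists_mem_eq_inf' hT (fun j => t j / (-g j))
        set lam := T.inf' hT (fun j => t j / (-g j)) with hlamdef
        have hj₀s : j₀ ∈ s := (Finset.mem_filter.mp hj₀T).1
        have hgj₀ : g j₀ < 0 := (Finset.mem_filter.mp hj₀T).2
        have hlam0 : 0 ≤ lam := by
          rw [hlam]; exact div_nonneg (ht j₀) (by linarith)
        set t' : ι → ℝ := fun i => if i ∈ s then t i + lam * g i else 0 with ht'def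
        have ht'nn : ∀ i, 0 ≤ t' i := by
          intro i
          simp only [ht'def]
          split_ifs with hi
          · by_cases hgi : g i < 0
            · have hiT : i ∈ T := Finset.mem_filter.mpr ⟨hi, hgi⟩
              have h1 := Finset.inf'_le (fun j => t j / (-g j)) hiT
              rw [← hlamdef] at h1
              have h2 : lam * (-g i) ≤ t i := by
                rw [← le_div_iff₀ (by linarith)]; exact h1
              nlinarith
            · push_neg at hgi
              have := mul_nonneg hlam0 hgi
              linarith [ht i]
          · exact le_refl 0
        have hsum : ∑ i ∈ s, t' i • v i = ∑ i ∈ s, t i • v i := by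
          have : ∀ i ∈ s, t' i • v i = t i • v i + lam • (g i • v i) := by
            intro i hi
            simp only [ht'def, if_pos hi, add_smul, smul_smul]
          rw [Finset.sum_congr rfl this, Finset.sum_add_distrib, ← Finset.smul_sum, hg,
            smul_zero, add_zero]
        have ht'j₀ : t' j₀ = 0 := by
          have hne : g j₀ ≠ 0 := ne_of_lt hgj₀
          simp only [ht'def, if_pos hj₀s, hlam]
          rw [div_neg, neg_mul, div_mul_cancel₀ _ hne]
          ring
        refine ⟨j₀, hj₀T, t', ht'nn, ?_⟩
        have h3 := Finset.add_sum_erase s (fun i => t' i • v i) hj₀s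
        simp only [ht'j₀, zero_smul, zero_add] at h3
        rw [h3]
        exact hsum.symm
      · rintro ⟨j, hjT, t, ht, rfl⟩
        have hjs : j ∈ s := (Finset.mem_filter.mp hjT).1
        refine ⟨Function.update t j 0, ?_, ?_⟩
        · intro i
          rcases eq_or_ne i j with rfl | hij
          · simp
          · simp [Function.update_of_ne hij, ht i]
        · have h3 := Finset.add_sum_erase s (fun i => Function.update t j 0 i • v i) hjs
          simp only [Function.update_self, zero_smul, zero_add] at h3
          rw [← h3]
          refine Finset.sum_congr rfl fun i hi => ?_
          rw [Function.update_of_ne (Finset.ne_of_mem_erase hi)]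
    rw [key]
    exact Set.Finite.isClosed_biUnion (T.finite_toSet)
      (fun j hj => ih _ (Finset.erase_ssubset (Finset.mem_filter.mp hj).1))
  · push_neg at hdep
    have hzero : ∀ g : ι → ℝ, ∑ i ∈ s, g i • v i = 0 → ∀ i ∈ s, g i = 0 := by
      intro g hg i hi
      have h1 := hdep g hg i hi
      have h2 : ∑ i ∈ s, (-g) i • v i = 0 := by
        simp only [Pi.neg_apply, neg_smul, Finset.sum_neg_distrib, hg, neg_zero]
      have h3 := hdep (-g) h2 i hi
      simp only [Pi.neg_apply] at h3
      linarith
    set L : ({i // i ∈ s} → ℝ) →ₗ[ℝ] E :=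
      { toFun := fun t => ∑ i ∈ s.attach, t i • v i.1
        map_add' := by
          intro a b
          simp [add_smul, Finset.sum_add_distrib]
        map_smul' := by
          intro c a
          simp [smul_smul, Finset.smul_sum] } with hLdef
    have hker : LinearMap.ker L = ⊥ := by
      rw [LinearMap.ker_eq_bot']
      intro t htL
      set g : ι → ℝ := fun i => if h : i ∈ s then t ⟨i, h⟩ else 0 with hgdef
      have hsum : ∑ i ∈ s, g i • v i = 0 := by
        rw [← Finset.sum_attach s (fun i => g i • v i)]
        rw [show (0 : E) = L t from htL.symm, hLdef]
        refine Finset.sum_congr rfl fun i _ => ?_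
        simp only [hgdef, dif_pos i.2]
      ext i
      have := hzero g hsum i.1 i.2
      simpa only [hgdef, dif_pos i.2, Subtype.coe_eta, Pi.zero_apply] using this
    have heq : {x : E | ∃ t : ι → ℝ, (∀ i, 0 ≤ t i) ∧ x = ∑ i ∈ s, t i • v i} =
        L '' {t | ∀ i, 0 ≤ t i} := by
      ext x
      constructor
      · rintro ⟨t, ht, rfl⟩
        refine ⟨fun i => t i.1, fun i => ht i.1, ?_⟩
        simp only [hLdef, LinearMap.coe_mk, AddHom.coe_mk]
        exact (Finset.sum_attach s (fun i => t i • v i)).symm ▸ rfl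
      · rintro ⟨t, ht, rfl⟩
        refine ⟨fun i => if h : i ∈ s then t ⟨i, h⟩ else 0, ?_, ?_⟩
        · intro i; dsimp only; split_ifs with h
          · exact ht _
          · exact le_refl 0
        · simp only [hLdef, LinearMap.coe_mk, AddHom.coe_mk]
          rw [← Finset.sum_attach s (fun i => (if h : i ∈ s then t ⟨i, h⟩ else 0) • v i)]
          refine Finset.sum_congr rfl fun i _ => ?_
          simp only [dif_pos i.2]
    rw [heq]
    have horth : IsClosed {t : {i // i ∈ s} → ℝ | ∀ i, 0 ≤ t i} := by
      have : {t : {i // i ∈ s} → ℝ | ∀ i, 0 ≤ t i} =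
          ⋂ i, (fun t : {i // i ∈ s} → ℝ => t i) ⁻¹' (Set.Ici 0) := by
        ext t; simp [Set.mem_iInter]
      rw [this]
      exact isClosed_iInter fun i => (isClosed_Ici).preimage (continuous_apply i)
    exact (L.isClosedEmbedding_of_injective hker).isClosedMap _ horth

open Matrix in
lemma farkas_neg {m n : ℕ} (A : Matrix (Fin m) (Fin n) ℝ) (c : Fin n → ℝ)
    (h : ∀ y s, A.transpose.mulVec y + s = c → ¬ (0 ≤ s)) :
    ∃ d : Fin n → ℝ, 0 ≤ d ∧ A.mulVec d = 0 ∧ c ⬝ᵥ d < 0 := by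
  classical
  set e : (Fin n → ℝ) ≃ₗ[ℝ] EuclideanSpace ℝ (Fin n) :=
    (WithLp.linearEquiv 2 ℝ (Fin n → ℝ)).symm with he
  set v' : (Fin m ⊕ Fin m) ⊕ Fin n → (Fin n → ℝ) := fun i =>
    match i with
    | .inl (.inl j) => fun i' => A j i'
    | .inl (.inr j) => fun i' => -A j i'
    | .inr i => Pi.single i 1 with hv'
  set v : (Fin m ⊕ Fin m) ⊕ Fin n → EuclideanSpace ℝ (Fin n) := fun i => e (v' i) with hv
  have hinner : ∀ w u : Fin n → ℝ, (inner ℝ (e w) (e u) : ℝ) = w ⬝ᵥ u := by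
    intro w u
    simp only [PiLp.inner_apply, RCLike.inner_apply, dotProduct, he, WithLp.linearEquiv,
      WithLp.equiv, conj_trivial]
    exact Finset.sum_congr rfl fun x _ => mul_comm _ _
  have hrep : ∀ t : (Fin m ⊕ Fin m) ⊕ Fin n → ℝ, ∑ i, t i • v' i =
      A.transpose.mulVec (fun j => t (.inl (.inl j)) - t (.inl (.inr j))) +
        (fun i' => t (.inr i')) := by
    intro t
    funext i'
    simp only [Finset.sum_apply, Pi.add_apply, Pi.smul_apply, smul_eq_mul,
      Fintype.sum_sum_type, Matrix.mulVec, dotProduct, Matrix.transpose_apply, hv',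
      Pi.single_apply, mul_ite, mul_one, mul_zero, mul_neg]
    rw [Finset.sum_ite_eq Finset.univ i' fun x => t (Sum.inr x)]
    simp only [Finset.sum_neg_distrib, sub_eq_add_neg, Finset.mem_univ, if_true, mul_add,
      mul_neg, Finset.sum_add_distrib, add_left_inj]
    rw [Finset.sum_congr rfl fun j _ => mul_comm (A j i') (t (Sum.inl (Sum.inl j)))]
    congr 1
    exact congrArg Neg.neg (Finset.sum_congr rfl fun j _ => mul_comm _ _)
  -- the cone
  set K : ConvexCone ℝ (EuclideanSpace ℝ (Fin n)) :=
    { carrier := {x | ∃ t : (Fin m ⊕ Fin m) ⊕ Fin n → ℝ,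
        (∀ i, 0 ≤ t i) ∧ x = ∑ i ∈ Finset.univ, t i • v i}
      smul_mem' := by
        rintro a ha x ⟨t, ht, rfl⟩
        refine ⟨fun i => a * t i, fun i => mul_nonneg ha.le (ht i), ?_⟩
        rw [Finset.smul_sum]
        refine Finset.sum_congr rfl fun i _ => ?_
        exact smul_smul a (t i) (v i)
      add_mem' := by
        rintro x ⟨t, ht, rfl⟩ y ⟨u, hu, rfl⟩
        exact ⟨fun i => t i + u i, fun i => add_nonneg (ht i) (hu i),
          by rw [← Finset.sum_add_distrib]; exact Finset.sum_congr rfl fun i _ => (add_smul _ _ _).symm⟩ } with hK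
  have hKclosed : IsClosed (K : Set (EuclideanSpace ℝ (Fin n))) := isClosed_coneSet v Finset.univ
  have hKne : ((K : Set (EuclideanSpace ℝ (Fin n)))).Nonempty :=
    ⟨0, ⟨0, fun i => le_refl 0, by simp⟩⟩
  have hsum_e : ∀ t : (Fin m ⊕ Fin m) ⊕ Fin n → ℝ,
      ∑ i, t i • v i = e (∑ i, t i • v' i) := by
    intro t
    rw [map_sum]
    exact Finset.sum_congr rfl fun i _ => (e.map_smul _ _).symm
  have hcK : e c ∉ K := by
    rintro ⟨t, ht, hc⟩
    rw [hsum_e, hrep] at hc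
    exact h _ _ (e.injective hc).symm (fun i => ht (.inr i))
  obtain ⟨d₀, hd₀K, hd₀c⟩ :=
    ProperCone.hyperplane_separation' (⟨K.toPointedCone
      (ConvexCone.Pointed.of_nonempty_of_isClosed hKne hKclosed), hKclosed⟩ :
        ProperCone ℝ (EuclideanSpace ℝ (Fin n))) (by exact hcK)
  set d : Fin n → ℝ := e.symm d₀ with hd
  have hed : e d = d₀ := e.apply_symm_apply d₀
  -- generators belong to K
  have hgen : ∀ idx, v idx ∈ K := by
    intro idx
    refine ⟨fun i => if i = idx then 1 else 0, fun i => by positivity, ?_⟩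
    simp [ite_smul]
  have hgen' : ∀ idx, 0 ≤ v' idx ⬝ᵥ d := by
    intro idx
    have := hd₀K _ (hgen idx)
    rw [hv, ← hed, hinner] at this
    exact this
  refine ⟨d, ?_, ?_, ?_⟩
  · intro i
    have := hgen' (.inr i)
    simpa [hv', dotProduct, Pi.single_apply, ite_mul] using this
  · funext j
    have h1 := hgen' (.inl (.inl j))
    have h2 := hgen' (.inl (.inr j))
    simp only [hv', dotProduct, neg_mul, Finset.sum_neg_distrib] at h1 h2
    have : ∑ i', A j i' * d i' = 0 := le_antisymm (by linarith) h1
    simpa [Matrix.mulVec, dotProduct] using this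
  · have : (inner ℝ d₀ (e c) : ℝ) < 0 := by rw [real_inner_comm]; exact hd₀c
    rw [← hed, hinner] at this
    calc c ⬝ᵥ d = d ⬝ᵥ c := dotProduct_comm _ _
    _ < 0 := this

lemma pval_eq_bot {m n : ℕ} (Ahat : Matrix (Fin m) (Fin n) ℝ) (bhat b : Fin m → ℝ)
    (chat c : Fin n → ℝ) (hP : (Pfeas m n Ahat bhat b).Nonempty)
    (hD : ¬ (Dfeas m n Ahat chat c).Nonempty) :
    pval m n Ahat bhat b chat c = ⊥ := by
  obtain ⟨x₀, hx₀A, hx₀nn⟩ := hP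
  obtain ⟨d, hdnn, hdA, hdc⟩ := farkas_neg Ahat (chat + c) (by
    intro y s hys hs
    exact hD ⟨(y, s), hys, hs⟩)
  have key : ∀ r : ℝ, ∃ z ∈ (fun x => (((chat + c) ⬝ᵥ x : ℝ) : EReal)) '' Pfeas m n Ahat bhat b,
      z ≤ (r : EReal) := by
    intro r
    set q : ℝ := (r - 1 - (chat + c) ⬝ᵥ x₀) / ((chat + c) ⬝ᵥ d) with hq
    set tt : ℝ := max 0 q with htt
    have httq : q ≤ tt := le_max_right _ _
    have htt0 : 0 ≤ tt := le_max_left _ _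
    refine ⟨(((chat + c) ⬝ᵥ (x₀ + tt • d) : ℝ) : EReal), ⟨x₀ + tt • d, ⟨?_, ?_⟩, rfl⟩, ?_⟩
    · rw [Matrix.mulVec_add, Matrix.mulVec_smul, hdA, smul_zero, add_zero, hx₀A]
    · intro i
      exact add_nonneg (hx₀nn i) (smul_nonneg htt0 (hdnn i))
    · have hc : (chat + c) ⬝ᵥ (x₀ + tt • d) = (chat + c) ⬝ᵥ x₀ + tt * ((chat + c) ⬝ᵥ d) := by
        rw [dotProduct_add, dotProduct_smul, smul_eq_mul]
      have hmul : tt * ((chat + c) ⬝ᵥ d) ≤ q * ((chat + c) ⬝ᵥ d) :=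
        mul_le_mul_of_nonpos_right httq hdc.le
      have hqmul : q * ((chat + c) ⬝ᵥ d) = r - 1 - (chat + c) ⬝ᵥ x₀ :=
        div_mul_cancel₀ _ hdc.ne
      have : (chat + c) ⬝ᵥ (x₀ + tt • d) ≤ r - 1 := by
        rw [hc]; rw [hqmul] at hmul; linarith
      exact_mod_cast (EReal.coe_le_coe_iff.mpr (this.trans (by linarith)))
  rw [pval, sInf_eq_bot]
  intro w hw
  rcases exists_between hw with ⟨z, hz1, hz2⟩
  have hzreal : z ≠ ⊥ := hz1.ne'
  have hztop : z ≠ ⊤ := hz2.ne_top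
  obtain ⟨a, ha, hale⟩ := key z.toReal
  exact ⟨a, ha, lt_of_le_of_lt (hale.trans_eq (EReal.coe_toReal hztop hzreal)) hz2⟩

/-- Under Assumption 1 (`U` compact, convex, containing `(0,0)`),
if `p⁺ = sup{p(b,c) : (b,c) ∈ U}` is a finite real number, then
`q⁺ = sup{p(b,c) : (b,c) ∈ Ū}` equals `p⁺`. -/
theorem q_plus_eq_p_plus_of_finite (m n : ℕ)
    (Ahat : Matrix (Fin m) (Fin n) ℝ) (bhat : Fin m → ℝ) (chat : Fin n → ℝ)
    (U : Set ((Fin m → ℝ) × (Fin n → ℝ)))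
    (hUcompact : IsCompact U) (hUconvex : Convex ℝ U) (hU0 : (0, 0) ∈ U)
    (hfin : ∃ v : ℝ,
      sSup ((fun bc => pval m n Ahat bhat bc.1 chat bc.2) '' U) = (v : EReal)) :
    sSup ((fun bc => pval m n Ahat bhat bc.1 chat bc.2) ''
        Ubar m n Ahat bhat chat U) =
      sSup ((fun bc => pval m n Ahat bhat bc.1 chat bc.2) '' U) := by
  obtain ⟨v, hv⟩ := hfin
  refine le_antisymm (sSup_le_sSup (Set.image_mono fun bc hbc => hbc.1)) ?_
  apply sSup_le
  rintro x ⟨bc, hbcU, rfl⟩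
  by_cases hP : (Pfeas m n Ahat bhat bc.1).Nonempty
  · by_cases hD : (Dfeas m n Ahat chat bc.2).Nonempty
    · exact le_sSup ⟨bc, ⟨hbcU, hP, hD⟩, rfl⟩
    · show pval m n Ahat bhat bc.1 chat bc.2 ≤ _
      rw [pval_eq_bot _ _ _ _ _ hP hD]
      exact bot_le
  · exfalso
    have htop : pval m n Ahat bhat bc.1 chat bc.2 = ⊤ := by
      rw [pval, Set.not_nonempty_iff_eq_empty.mp hP, Set.image_empty, sInf_empty]
    have hle : pval m n Ahat bhat bc.1 chat bc.2 ≤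
        sSup ((fun bc => pval m n Ahat bhat bc.1 chat bc.2) '' U) := le_sSup ⟨bc, hbcU, rfl⟩
    rw [htop, hv] at hle
    exact (EReal.coe_ne_top v) (top_le_iff.mp hle)
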